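/- Let p be a prime with p ≡ 1 (mod 36). Then there are no integers x, y, z with x² + y² + z⁹ = p⁹ and z ≡ 18 (mod 36). -/

import Mathlib

private lemma sq_mod_four (n : ℕ) : n ^ 2 % 4 = 0 ∨ n ^ 2 % 4 = 1 := by
  rcases Nat.even_or_odd n with ⟨t, rfl⟩ | ⟨t, rfl⟩
  · have : (t + t) ^ 2 = 4 * t ^ 2 := by ring
    omega
  · have : (2 * t + 1) ^ 2 = 4 * (t ^ 2 + t) + 1 := by ring
    omega

private lemma not_sq_add_sq_of_mod_four (a : ℕ) (ha : a % 4 = 3) :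
    ¬ ∃ x y : ℕ, a = x ^ 2 + y ^ 2 := by
  rintro ⟨x, y, rfl⟩
  have h1 := sq_mod_four x
  have h2 := sq_mod_four y
  omega

theorem no_rep_k9 (p : ℕ) (hp : p.Prime) (hp1 : (p : ℤ) ≡ 1 [ZMOD 36]) :
    ¬ ∃ x y z : ℤ, z ≡ 18 [ZMOD 36] ∧ x ^ 2 + y ^ 2 + z ^ 9 = (p : ℤ) ^ 9 := by
  rintro ⟨x, y, z, hz, heq⟩
  obtain ⟨k₁, hk₁⟩ := Int.ModEq.dvd hp1
  obtain ⟨k₂, hk₂⟩ := Int.ModEq.dvd hz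
  have hmono := Odd.strictMono_pow (R := ℤ) (by decide : Odd 9)
  set A : ℤ := (p : ℤ) - z with hA
  set B : ℤ := (p:ℤ)^8 + (p:ℤ)^7*z + (p:ℤ)^6*z^2 + (p:ℤ)^5*z^3 + (p:ℤ)^4*z^4
      + (p:ℤ)^3*z^5 + (p:ℤ)^2*z^6 + (p:ℤ)*z^7 + z^8 with hB
  have hAB : A * B = x ^ 2 + y ^ 2 := by rw [hA, hB]; nlinarith [heq]
  have hz9 : z ^ 9 ≤ (p : ℤ) ^ 9 := by nlinarith [sq_nonneg x, sq_nonneg y]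
  have hzp : z ≤ (p : ℤ) := hmono.le_iff_le.mp hz9
  have hApos : 0 < A := by omega
  have hNpos : 0 < x ^ 2 + y ^ 2 := by
    rcases lt_or_eq_of_le (by positivity : (0:ℤ) ≤ x ^ 2 + y ^ 2) with h | h
    · exact h
    · have hzz : z ^ 9 = (p:ℤ) ^ 9 := by omega
      have : z = (p : ℤ) := hmono.injective hzz
      omega
  have hBpos : 0 < B := by nlinarith
  set a : ℕ := A.toNat with ha
  set b : ℕ := B.toNat with hb
  have haA : (a : ℤ) = A := Int.toNat_of_nonneg hApos.le
  have hbB : (b : ℤ) = B := Int.toNat_of_nonneg hBpos.le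
  have ha0 : a ≠ 0 := by omega
  have hb0 : b ≠ 0 := by omega
  have key : a * b = x.natAbs ^ 2 + y.natAbs ^ 2 := by
    have : ((a * b : ℕ) : ℤ) = (x.natAbs ^ 2 + y.natAbs ^ 2 : ℕ) := by
      push_cast
      rw [haA, hbB, hAB]
      simp [sq_abs]
    exact_mod_cast this
  have hev : ∀ q : ℕ, q.Prime → q % 4 = 3 → Even (padicValNat q (a * b)) :=
    fun q hq h3 => by
      by_cases hd : q ∣ a * b
      · exact Nat.eq_sq_add_sq_iff.mp ⟨x.natAbs, y.natAbs, key⟩ q (Nat.mem_primeFactors.mpr ⟨hq, hd, Nat.mul_ne_zero ha0 hb0⟩) h3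
      · simp [padicValNat.eq_zero_of_not_dvd hd]
  have hevA : ∀ {q : ℕ}, q.Prime → q % 4 = 3 → Even (padicValNat q a) := by
    intro q hq h3
    haveI : Fact q.Prime := ⟨hq⟩
    by_cases hqa : q ∣ a
    · have hqb : ¬ q ∣ b := by
        intro hqb
        have hqA : (q : ℤ) ∣ A := haA ▸ Int.natCast_dvd_natCast.mpr hqa
        have hqB : (q : ℤ) ∣ B := hbB ▸ Int.natCast_dvd_natCast.mpr hqb
        have hdiv : A ∣ B - 9 * (p:ℤ)^8 :=
          ⟨-(z^7 + 2*(p:ℤ)*z^6 + 3*(p:ℤ)^2*z^5 + 4*(p:ℤ)^3*z^4 + 5*(p:ℤ)^4*z^3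
            + 6*(p:ℤ)^5*z^2 + 7*(p:ℤ)^6*z + 8*(p:ℤ)^7), by rw [hA, hB]; ring⟩
        have h9 : (q : ℤ) ∣ 9 * (p:ℤ)^8 := by
          have := dvd_sub hqB (hqA.trans hdiv)
          simpa using this
        have h9' : q ∣ 9 * p ^ 8 := by exact_mod_cast h9
        rcases (Nat.Prime.dvd_mul hq).mp h9' with h | h
        · have hq3 : q = 3 := by
            have := Nat.le_of_dvd (by norm_num) h
            interval_cases q <;> omega
          subst hq3
          have : (3 : ℤ) ∣ A := hqA
          omega
        · have : q = p := (Nat.prime_dvd_prime_iff_eq hq hp).mp (hq.dvd_of_dvd_pow h)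
          subst this
          -- p ≡ 1 mod 36 so p % 4 = 1
          omega
      have hvb : padicValNat q b = 0 := padicValNat.eq_zero_of_not_dvd hqb
      have hmul := padicValNat.mul (p := q) ha0 hb0
      have := hev q hq h3
      rw [hmul, hvb, add_zero] at this
      exact this
    · simp [padicValNat.eq_zero_of_not_dvd hqa]
  have hsq := Nat.eq_sq_add_sq_iff.mpr (fun q hq h3 => hevA (Nat.prime_of_mem_primeFactors hq) h3)
  exact not_sq_add_sq_of_mod_four a (by omega) hsq
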